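/- arXiv:2101.00494 — 3 statements merged into one kernel-verified Lean document; each statement's English description precedes it below -/
import Mathlib

section
/- Let A and B be real symmetric positive definite d×d matrices with A ⪯ B (i.e., B − A is positive semidefinite). If A⁻¹ is NOT ⪯ 2B⁻¹ (i.e., 2B⁻¹ − A⁻¹ is not positive semidefinite), then log det B ≥ log det A + log 2. -/
open Matrix Finset

variable {d : ℕ}  -- auxiliary section variable

lemma conj_dot (P M : Matrix (Fin d) (Fin d) ℝ) (x : Fin d → ℝ) :
    x ⬝ᵥ (P * M * Pᵀ) *ᵥ x = (Pᵀ *ᵥ x) ⬝ᵥ M *ᵥ (Pᵀ *ᵥ x) := by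
  rw [← mulVec_mulVec, ← mulVec_mulVec, dotProduct_mulVec, ← mulVec_transpose]

lemma posdef_conj {A : Matrix (Fin d) (Fin d) ℝ} (P : Matrix (Fin d) (Fin d) ℝ)
    (hA : A.PosDef) (hP : Pᵀ = P) (hdet : IsUnit P.det) : (P * A * P).PosDef := by
  refine posDef_iff_dotProduct_mulVec.mpr ⟨?_, ?_⟩
  · have h := (hA.posSemidef.conjTranspose_mul_mul_same P).1
    rwa [conjTranspose_eq_transpose_of_trivial, hP] at h
  · intro x hx
    have hv : P *ᵥ x ≠ 0 := by
      intro hz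
      apply hx
      have h2 : P⁻¹ *ᵥ (P *ᵥ x) = P⁻¹ *ᵥ (0 : Fin d → ℝ) := by rw [hz]
      rwa [mulVec_mulVec, nonsing_inv_mul _ hdet, one_mulVec, mulVec_zero] at h2
    rw [star_trivial, show P * A * P = P * A * Pᵀ by rw [hP], conj_dot]
    have := hA.dotProduct_mulVec_pos (x := Pᵀ *ᵥ x) (by rw [hP]; exact hv)
    rwa [star_trivial] at this

lemma key (C : Matrix (Fin d) (Fin d) ℝ) (hC : C.PosDef)
    (h1 : ((1 : Matrix (Fin d) (Fin d) ℝ) - C).PosSemidef) (x : Fin d → ℝ) :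
    C.det * (x ⬝ᵥ C⁻¹ *ᵥ x) ≤ x ⬝ᵥ x := by
  have hH : C.IsHermitian := hC.1
  set U : Matrix (Fin d) (Fin d) ℝ := (hH.eigenvectorUnitary : Matrix (Fin d) (Fin d) ℝ) with hU
  set lam : Fin d → ℝ := hH.eigenvalues with hlam
  have hUstar : (star (hH.eigenvectorUnitary : Matrix (Fin d) (Fin d) ℝ)) = Uᵀ := by
    rw [star_eq_conjTranspose, conjTranspose_eq_transpose_of_trivial]
  have hU1 : U * Uᵀ = 1 := by
    have := (hH.eigenvectorUnitary).2
    rw [Matrix.mem_unitaryGroup_iff] at this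
    rwa [hUstar] at this
  have hU2 : Uᵀ * U = 1 := by
    have := (hH.eigenvectorUnitary).2
    rw [Matrix.mem_unitaryGroup_iff'] at this
    rwa [hUstar] at this
  have hdiag : Uᵀ * C * U = diagonal lam := by
    have := hH.conjStarAlgAut_star_eigenvectorUnitary
    simp only [Unitary.conjStarAlgAut_apply, Unitary.coe_star, star_star] at this
    rwa [hUstar, show (RCLike.ofReal ∘ lam : Fin d → ℝ) = lam from rfl] at this
  have hspec : C = U * diagonal lam * Uᵀ := by
    have := hH.spectral_theorem
    simp only [Unitary.conjStarAlgAut_apply] at this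
    rwa [hUstar, show (RCLike.ofReal ∘ lam : Fin d → ℝ) = lam from rfl] at this
  have hpos : ∀ i, 0 < lam i := fun i => hC.eigenvalues_pos i
  have hle1 : ∀ i, lam i ≤ 1 := by
    intro i
    have hpsd := h1.conjTranspose_mul_mul_same U
    rw [conjTranspose_eq_transpose_of_trivial] at hpsd
    have heq : Uᵀ * (1 - C) * U = diagonal ((1 : Fin d → ℝ) - lam) := by
      rw [Matrix.mul_sub, Matrix.sub_mul, mul_one, hU2, hdiag, ← diagonal_one, diagonal_sub]
      rfl
    rw [heq, posSemidef_diagonal_iff] at hpsd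
    have h3 := Pi.le_def.mp hpsd i
    simp only [Pi.zero_apply, Pi.sub_apply, Pi.one_apply] at h3
    linarith
  have hlamne : ∀ i, lam i ≠ 0 := fun i => (hpos i).ne'
  have hCinv : C⁻¹ = U * diagonal (fun i => (lam i)⁻¹) * Uᵀ := by
    apply Matrix.inv_eq_right_inv
    rw [hspec]
    calc U * diagonal lam * Uᵀ * (U * diagonal (fun i => (lam i)⁻¹) * Uᵀ)
        = U * diagonal lam * (Uᵀ * U) * diagonal (fun i => (lam i)⁻¹) * Uᵀ := by
          noncomm_ring
      _ = U * (diagonal lam * diagonal (fun i => (lam i)⁻¹)) * Uᵀ := by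
          rw [hU2, mul_one]; noncomm_ring
      _ = 1 := by
          rw [diagonal_mul_diagonal]
          have : (fun i => lam i * (lam i)⁻¹) = fun _ => (1:ℝ) := by
            funext i; exact mul_inv_cancel₀ (hlamne i)
          rw [this, diagonal_one, mul_one, hU1]
  have hdet : C.det = ∏ i, lam i := by
    simpa using hH.det_eq_prod_eigenvalues
  have hyy : x ⬝ᵥ x = (Uᵀ *ᵥ x) ⬝ᵥ (Uᵀ *ᵥ x) := by
    have h := conj_dot U 1 x
    rw [mul_one, hU1, one_mulVec, one_mulVec] at h
    exact h
  rw [hCinv, conj_dot, hyy, hdet]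
  set y := Uᵀ *ᵥ x with hy
  rw [show (y ⬝ᵥ diagonal (fun i => (lam i)⁻¹) *ᵥ y) = ∑ i, y i * ((lam i)⁻¹ * y i) by
    simp [dotProduct, mulVec_diagonal],
    show y ⬝ᵥ y = ∑ i, y i * y i from rfl, Finset.mul_sum]
  apply Finset.sum_le_sum
  intro i _
  have hprod : (∏ j, lam j) * (lam i)⁻¹ = ∏ j ∈ univ.erase i, lam j := by
    rw [← Finset.mul_prod_erase univ lam (mem_univ i), mul_comm (lam i) _, mul_assoc,
      mul_inv_cancel₀ (hlamne i), mul_one]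
  have hP1 : ∏ j ∈ univ.erase i, lam j ≤ 1 :=
    Finset.prod_le_one (fun j _ => (hpos j).le) (fun j _ => hle1 j)
  have hP0 : 0 ≤ ∏ j ∈ univ.erase i, lam j :=
    Finset.prod_nonneg (fun j _ => (hpos j).le)
  calc (∏ j, lam j) * (y i * ((lam i)⁻¹ * y i))
      = ((∏ j, lam j) * (lam i)⁻¹) * (y i * y i) := by ring
    _ = (∏ j ∈ univ.erase i, lam j) * (y i * y i) := by rw [hprod]
    _ ≤ 1 * (y i * y i) := by
        apply mul_le_mul_of_nonneg_right hP1 (mul_self_nonneg _)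
    _ = y i * y i := one_mul _

theorem stmt_1 (d : ℕ) (A B : Matrix (Fin d) (Fin d) ℝ)
    (hA : A.PosDef) (hB : B.PosDef) (hAB : (B - A).PosSemidef)
    (h : ¬ ((2 : ℝ) • B⁻¹ - A⁻¹).PosSemidef) :
    Real.log A.det + Real.log 2 ≤ Real.log B.det := by
  have hAdet : 0 < A.det := hA.det_pos
  have hBdet : 0 < B.det := hB.det_pos
  have hAunit : IsUnit A.det := isUnit_iff_ne_zero.mpr hAdet.ne'
  have hBunit : IsUnit B.det := isUnit_iff_ne_zero.mpr hBdet.ne'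
  -- square root of B
  set S : Matrix (Fin d) (Fin d) ℝ := (open scoped MatrixOrder in CFC.sqrt B) with hSdef
  have hSS : S * S = B := by open scoped MatrixOrder in exact CFC.sqrt_mul_sqrt_self B hB.posSemidef.nonneg
  have hSpsd : S.PosSemidef := by open scoped MatrixOrder in exact (CFC.sqrt_nonneg B).posSemidef
  have hSdet : S.det * S.det = B.det := by rw [← det_mul, hSS]
  have hSunit : IsUnit S.det := by
    apply isUnit_iff_ne_zero.mpr
    intro h0
    rw [h0, mul_zero] at hSdet
    exact hBdet.ne' hSdet.symm
  have hST : Sᵀ = S := by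
    have := hSpsd.1
    rwa [IsHermitian, conjTranspose_eq_transpose_of_trivial] at this
  have hSinvT : (S⁻¹)ᵀ = S⁻¹ := by rw [transpose_nonsing_inv, hST]
  have hSinvS : S⁻¹ * S = 1 := nonsing_inv_mul _ hSunit
  have hSSinv : S * S⁻¹ = 1 := mul_nonsing_inv _ hSunit
  -- C = S⁻¹ A S⁻¹
  set C : Matrix (Fin d) (Fin d) ℝ := S⁻¹ * A * S⁻¹ with hCdef
  have hSinvdet : IsUnit (S⁻¹).det := by
    rw [det_nonsing_inv]
    exact isUnit_iff_ne_zero.mpr (by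
      simp [Ring.inverse_eq_inv']
      exact fun hh => (isUnit_iff_ne_zero.mp hSunit) hh)
  have hC : C.PosDef := posdef_conj S⁻¹ hA hSinvT hSinvdet
  have hBinv : B⁻¹ = S⁻¹ * S⁻¹ := by rw [← hSS, Matrix.mul_inv_rev]
  have h1C : ((1 : Matrix (Fin d) (Fin d) ℝ) - C).PosSemidef := by
    have hpsd := hAB.conjTranspose_mul_mul_same S⁻¹
    rw [conjTranspose_eq_transpose_of_trivial, hSinvT] at hpsd
    have heq : S⁻¹ * (B - A) * S⁻¹ = 1 - C := by
      rw [Matrix.mul_sub, Matrix.sub_mul, hCdef]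
      congr 1
      rw [← hSS]
      calc S⁻¹ * (S * S) * S⁻¹ = (S⁻¹ * S) * (S * S⁻¹) := by noncomm_ring
        _ = 1 := by rw [hSinvS, hSSinv, mul_one]
    rwa [heq] at hpsd
  have hCinv : C⁻¹ = S * A⁻¹ * S := by
    apply Matrix.inv_eq_right_inv
    calc S⁻¹ * A * S⁻¹ * (S * A⁻¹ * S)
        = S⁻¹ * A * (S⁻¹ * S) * A⁻¹ * S := by noncomm_ring
      _ = S⁻¹ * (A * A⁻¹) * S := by rw [hSinvS]; noncomm_ring
      _ = 1 := by rw [mul_nonsing_inv _ hAunit, mul_one, hSinvS]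
  have hCdet : C.det = A.det / B.det := by
    rw [hCdef, det_mul, det_mul, det_nonsing_inv, Ring.inverse_eq_inv', ← hSdet]
    have hs0 : S.det ≠ 0 := isUnit_iff_ne_zero.mp hSunit
    field_simp
    try ring
  -- extract a bad vector
  have hherm : ((2 : ℝ) • B⁻¹ - A⁻¹).IsHermitian := by
    have e1 : (B⁻¹)ᵀ = B⁻¹ := by
      rw [← conjTranspose_eq_transpose_of_trivial]; exact hB.inv.1
    have e2 : (A⁻¹)ᵀ = A⁻¹ := by
      rw [← conjTranspose_eq_transpose_of_trivial]; exact hA.inv.1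
    show ((2 : ℝ) • B⁻¹ - A⁻¹)ᴴ = (2 : ℝ) • B⁻¹ - A⁻¹
    simp [conjTranspose_sub, conjTranspose_smul, e1, e2]
  obtain ⟨x, hx⟩ : ∃ x : Fin d → ℝ, x ⬝ᵥ (((2 : ℝ) • B⁻¹ - A⁻¹) *ᵥ x) < 0 := by
    by_contra hc
    push_neg at hc
    exact h (posSemidef_iff_dotProduct_mulVec.mpr ⟨hherm, fun x => by simpa using hc x⟩)
  have hx' : 2 * (x ⬝ᵥ B⁻¹ *ᵥ x) - x ⬝ᵥ A⁻¹ *ᵥ x < 0 := by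
    have : x ⬝ᵥ (((2 : ℝ) • B⁻¹ - A⁻¹) *ᵥ x)
        = 2 * (x ⬝ᵥ B⁻¹ *ᵥ x) - x ⬝ᵥ A⁻¹ *ᵥ x := by
      rw [sub_mulVec, dotProduct_sub, smul_mulVec, dotProduct_smul, smul_eq_mul]
    linarith [this ▸ hx]
  set p := x ⬝ᵥ A⁻¹ *ᵥ x with hp
  set q := x ⬝ᵥ B⁻¹ *ᵥ x with hq
  have hq0 : 0 ≤ q := by
    have := hB.inv.posSemidef.dotProduct_mulVec_nonneg x
    simpa using this
  have hp0 : 0 < p := by linarith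
  -- apply key lemma at w = S⁻¹ x
  have hkey := key C hC h1C (S⁻¹ *ᵥ x)
  have e1 : (S⁻¹ *ᵥ x) ⬝ᵥ C⁻¹ *ᵥ (S⁻¹ *ᵥ x) = p := by
    have h := conj_dot S⁻¹ C⁻¹ x
    rw [hSinvT] at h
    rw [← h, hCinv,
      show S⁻¹ * (S * A⁻¹ * S) * S⁻¹ = A⁻¹ by
        calc S⁻¹ * (S * A⁻¹ * S) * S⁻¹ = (S⁻¹ * S) * A⁻¹ * (S * S⁻¹) := by noncomm_ring
          _ = A⁻¹ := by rw [hSinvS, hSSinv, one_mul, mul_one]]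
  have e2 : (S⁻¹ *ᵥ x) ⬝ᵥ (S⁻¹ *ᵥ x) = q := by
    have h := conj_dot S⁻¹ 1 x
    rw [hSinvT, one_mulVec] at h
    rw [← h, mul_one, ← hBinv]
  rw [e1, e2, hCdet] at hkey
  -- conclude 2 det A ≤ det B
  have hdd : A.det / B.det < 1 / 2 := by
    nlinarith
  have h2AB : 2 * A.det ≤ B.det := by
    rw [div_lt_div_iff₀ hBdet (by norm_num : (0:ℝ) < 2)] at hdd
    linarith
  have hlog : Real.log (A.det * 2) ≤ Real.log B.det := by
    apply Real.log_le_log (by positivity)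
    linarith
  rwa [Real.log_mul hAdet.ne' (by norm_num)] at hlog
end

section
/- Let A be a real symmetric positive definite d×d matrix and Δ a real symmetric positive semidefinite d×d matrix, and set B = A + Δ. If there exists a unit vector x with xᵀ(A⁻¹ − 2B⁻¹)x ≥ 0, then the maximum eigenvalue of I + Δ^{1/2} A⁻¹ Δ^{1/2} is at least 2. -/
open Matrix

section

open scoped ComplexOrder

/-- The PSD square root, as `Matrix.PosSemidef.sqrt` was defined in Mathlib of December 2024
(removed since). -/
noncomputable def Matrix.PosSemidef.sqrt {n 𝕜 : Type*} [Fintype n] [DecidableEq n] [RCLike 𝕜]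
    {A : Matrix n n 𝕜} (hA : A.PosSemidef) : Matrix n n 𝕜 :=
  hA.1.eigenvectorUnitary.1 * diagonal ((↑) ∘ (√·) ∘ hA.1.eigenvalues) *
    (star hA.1.eigenvectorUnitary : Matrix n n 𝕜)

end

section

open scoped ComplexOrder

lemma Matrix.PosSemidef.posSemidef_sqrt {n 𝕜 : Type*} [Fintype n] [DecidableEq n] [RCLike 𝕜]
    {A : Matrix n n 𝕜} (hA : A.PosSemidef) : hA.sqrt.PosSemidef := by
  have hD : (diagonal ((↑) ∘ (√·) ∘ hA.1.eigenvalues : n → 𝕜)).PosSemidef := by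
    rw [posSemidef_diagonal_iff]
    intro i
    simp only [Function.comp_apply]
    exact_mod_cast Real.sqrt_nonneg _
  have := hD.mul_mul_conjTranspose_same (hA.1.eigenvectorUnitary : Matrix n n 𝕜)
  unfold Matrix.PosSemidef.sqrt
  rwa [Matrix.star_eq_conjTranspose]

lemma Matrix.PosSemidef.sqrt_mul_self {n 𝕜 : Type*} [Fintype n] [DecidableEq n] [RCLike 𝕜]
    {A : Matrix n n 𝕜} (hA : A.PosSemidef) : hA.sqrt * hA.sqrt = A := by
  unfold Matrix.PosSemidef.sqrt
  conv_rhs => rw [hA.1.spectral_theorem, Unitary.conjStarAlgAut_apply]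
  have hu := Unitary.star_mul_self hA.1.eigenvectorUnitary
  have hdd : diagonal ((↑) ∘ (√·) ∘ hA.1.eigenvalues : n → 𝕜) *
      diagonal ((↑) ∘ (√·) ∘ hA.1.eigenvalues : n → 𝕜) =
      diagonal (RCLike.ofReal ∘ hA.1.eigenvalues) := by
    rw [diagonal_mul_diagonal]
    congr 1
    funext i
    simp only [Function.comp_apply]
    rw [← RCLike.ofReal_mul, Real.mul_self_sqrt (hA.eigenvalues_nonneg i)]
  calc _ = (hA.1.eigenvectorUnitary : Matrix n n 𝕜) *
        diagonal ((↑) ∘ (√·) ∘ hA.1.eigenvalues : n → 𝕜) *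
        ((star hA.1.eigenvectorUnitary : Matrix n n 𝕜) * (hA.1.eigenvectorUnitary : Matrix n n 𝕜)) *
        diagonal ((↑) ∘ (√·) ∘ hA.1.eigenvalues : n → 𝕜) *
        (star hA.1.eigenvectorUnitary : Matrix n n 𝕜) := by simp only [Matrix.mul_assoc]
    _ = _ := by
      rw [Unitary.coe_star_mul_self, Matrix.mul_one,
        Matrix.mul_assoc _ (diagonal _) (diagonal _), hdd]

end

private lemma symm_dot {d : ℕ} {C : Matrix (Fin d) (Fin d) ℝ} (hC : Cᵀ = C)
    (u v : Fin d → ℝ) : u ⬝ᵥ (C *ᵥ v) = (C *ᵥ u) ⬝ᵥ v := by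
  rw [dotProduct_mulVec, ← mulVec_transpose, hC]

private lemma quad_lt {d : ℕ} {M : Matrix (Fin d) (Fin d) ℝ} (hM : M.IsHermitian) {c : ℝ}
    (h : ∀ i, hM.eigenvalues i < c) {z : Fin d → ℝ} (hz : z ≠ 0) :
    z ⬝ᵥ (M *ᵥ z) < c * (z ⬝ᵥ z) := by
  set U : Matrix (Fin d) (Fin d) ℝ := (hM.eigenvectorUnitary : Matrix (Fin d) (Fin d) ℝ)
    with hUdef
  have hstar : star U = Uᵀ := by
    rw [Matrix.star_eq_conjTranspose, conjTranspose_eq_transpose_of_trivial]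
  have hU1 : U * Uᵀ = 1 := by
    have := (Matrix.mem_unitaryGroup_iff).mp hM.eigenvectorUnitary.2
    rwa [hstar] at this
  have hDiag : M = U * diagonal hM.eigenvalues * Uᵀ := by
    have h2 := hM.spectral_theorem
    rw [Unitary.conjStarAlgAut_apply] at h2
    rw [← hUdef] at h2
    rw [hstar] at h2
    rwa [show (RCLike.ofReal ∘ hM.eigenvalues : Fin d → ℝ) = hM.eigenvalues by
      rw [RCLike.ofReal_real_eq_id]; rfl] at h2
  have hzw : U *ᵥ (Uᵀ *ᵥ z) = z := by rw [mulVec_mulVec, hU1, one_mulVec]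
  have hw0 : Uᵀ *ᵥ z ≠ 0 := by
    intro h0
    apply hz
    rw [← hzw, h0, mulVec_zero]
  have hdotU : ∀ v : Fin d → ℝ, z ⬝ᵥ (U *ᵥ v) = (Uᵀ *ᵥ z) ⬝ᵥ v := by
    intro v
    rw [dotProduct_mulVec, ← mulVec_transpose]
  have key1 : z ⬝ᵥ (M *ᵥ z) = ∑ i, hM.eigenvalues i * ((Uᵀ *ᵥ z) i) ^ 2 := by
    conv_lhs => rw [hDiag, ← mulVec_mulVec, ← mulVec_mulVec, hdotU]
    simp only [dotProduct, mulVec_diagonal]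
    exact Finset.sum_congr rfl fun i _ => by ring
  have key2 : z ⬝ᵥ z = ∑ i, ((Uᵀ *ᵥ z) i) ^ 2 := by
    have h2 := hdotU (Uᵀ *ᵥ z)
    rw [hzw] at h2
    rw [h2]
    simp only [dotProduct]
    exact Finset.sum_congr rfl fun i _ => by ring
  rw [key1, key2, Finset.mul_sum]
  obtain ⟨j, hj⟩ := Function.ne_iff.mp hw0
  refine Finset.sum_lt_sum (fun i _ => ?_) ⟨j, Finset.mem_univ j, ?_⟩
  · exact mul_le_mul_of_nonneg_right (h i).le (sq_nonneg _)
  · have hwj : 0 < ((Uᵀ *ᵥ z) j) ^ 2 :=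
      lt_of_le_of_ne (sq_nonneg _) (Ne.symm (pow_ne_zero 2 hj))
    exact mul_lt_mul_of_pos_right (h j) hwj

theorem stmt_4 (d : ℕ) (A Δ B : Matrix (Fin d) (Fin d) ℝ)
    (hA : A.PosDef) (hΔ : Δ.PosSemidef) (hB : B = A + Δ)
    (x : EuclideanSpace ℝ (Fin d)) (hx : ‖x‖ = 1)
    (hquad : 0 ≤ x ⬝ᵥ ((A⁻¹ - (2 : ℝ) • B⁻¹) *ᵥ x))
    (hH : (1 + hΔ.sqrt * A⁻¹ * hΔ.sqrt).IsHermitian) :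
    ∃ i : Fin d, 2 ≤ hH.eigenvalues i := by
  by_contra hcon
  push_neg at hcon
  have hS : hΔ.sqrt ᵀ = hΔ.sqrt := by
    have h' : hΔ.sqrtᴴ = hΔ.sqrt := hΔ.posSemidef_sqrt.1
    rwa [conjTranspose_eq_transpose_of_trivial] at h'
  have hSS : hΔ.sqrt * hΔ.sqrt = Δ := hΔ.sqrt_mul_self
  have hAt : Aᵀ = A := by
    have h' : Aᴴ = A := hA.1; rwa [conjTranspose_eq_transpose_of_trivial] at h'
  have hAinv : (A⁻¹).PosDef := hA.inv
  have hAit : (A⁻¹)ᵀ = A⁻¹ := by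
    have h' : (A⁻¹)ᴴ = A⁻¹ := hAinv.1; rwa [conjTranspose_eq_transpose_of_trivial] at h'
  have hBpd : B.PosDef := hB ▸ hA.add_posSemidef hΔ
  have hBt : Bᵀ = B := by
    have h' : Bᴴ = B := hBpd.1; rwa [conjTranspose_eq_transpose_of_trivial] at h'
  have hAA : A * A⁻¹ = 1 := mul_nonsing_inv _ hA.det_pos.ne'.isUnit
  have hBB : B * B⁻¹ = 1 := mul_nonsing_inv _ hBpd.det_pos.ne'.isUnit
  have hx0 : (x : Fin d → ℝ) ≠ 0 := by
    intro h0
    have : x = (0 : EuclideanSpace ℝ (Fin d)) := by simpa using congrArg (WithLp.toLp 2) h0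
    rw [this, norm_zero] at hx
    norm_num at hx
  set y : Fin d → ℝ := B⁻¹ *ᵥ x with hydef
  have hxy : B *ᵥ y = x := by rw [hydef, mulVec_mulVec, hBB, one_mulVec]
  have hy0 : y ≠ 0 := by
    intro h0
    apply hx0
    rw [← hxy, h0, mulVec_zero]
  set a : ℝ := y ⬝ᵥ (A *ᵥ y) with hadef
  set p : ℝ := y ⬝ᵥ (Δ *ᵥ y) with hpdef
  set q : ℝ := (Δ *ᵥ y) ⬝ᵥ (A⁻¹ *ᵥ (Δ *ᵥ y)) with hqdef
  have ha : 0 < a := by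
    rw [hadef]; simpa using hA.dotProduct_mulVec_pos hy0
  have hp0 : 0 ≤ p := by
    rw [hpdef]; simpa using hΔ.dotProduct_mulVec_nonneg y
  have hq0 : 0 ≤ q := by
    rw [hqdef]; simpa using hAinv.posSemidef.dotProduct_mulVec_nonneg (Δ *ᵥ y)
  have haux : ∀ w : Fin d → ℝ, (A *ᵥ y) ⬝ᵥ (A⁻¹ *ᵥ w) = y ⬝ᵥ w := by
    intro w
    rw [← symm_dot hAt, mulVec_mulVec, hAA, one_mulVec]
  have haux2 : (Δ *ᵥ y) ⬝ᵥ (A⁻¹ *ᵥ (A *ᵥ y)) = p := by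
    rw [dotProduct_comm, ← symm_dot hAit, haux, ← hpdef]
  have key : q < a := by
    rcases eq_or_lt_of_le hq0 with h0 | hqpos
    · rw [← h0]; exact ha
    · have hΔy : Δ *ᵥ y ≠ 0 := by
        intro h0
        rw [hqdef, h0] at hqpos
        simp at hqpos
      have hz : hΔ.sqrt *ᵥ y ≠ 0 := by
        intro h0
        apply hΔy
        rw [← hSS, ← mulVec_mulVec, h0, mulVec_zero]
      have hSz : hΔ.sqrt *ᵥ (hΔ.sqrt *ᵥ y) = Δ *ᵥ y := by
        rw [mulVec_mulVec, hSS]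
      have h1 : q < p := by
        have hq2 := quad_lt hH hcon hz
        rw [add_mulVec, one_mulVec, dotProduct_add] at hq2
        have e1 : (hΔ.sqrt *ᵥ y) ⬝ᵥ (hΔ.sqrt *ᵥ y) = p := by
          rw [← symm_dot hS, hSz, ← hpdef]
        have e2 : (hΔ.sqrt *ᵥ y) ⬝ᵥ ((hΔ.sqrt * A⁻¹ * hΔ.sqrt) *ᵥ (hΔ.sqrt *ᵥ y)) = q := by
          rw [← mulVec_mulVec, ← mulVec_mulVec, symm_dot hS, hSz, ← hqdef]
        rw [e1, e2] at hq2
        linarith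
      have h2 : p ^ 2 ≤ a * q := by
        set t : ℝ := p / q with htdef
        have htq : t * q = p := div_mul_cancel₀ p hqpos.ne'
        have hpsd : 0 ≤ (A *ᵥ y - t • (Δ *ᵥ y)) ⬝ᵥ (A⁻¹ *ᵥ (A *ᵥ y - t • (Δ *ᵥ y))) := by
          simpa using hAinv.posSemidef.dotProduct_mulVec_nonneg (A *ᵥ y - t • (Δ *ᵥ y))
        simp only [mulVec_sub, mulVec_smul, sub_dotProduct, dotProduct_sub,
          smul_dotProduct, dotProduct_smul, smul_eq_mul] at hpsd
        rw [haux, haux, haux2, ← hadef, ← hpdef, ← hqdef] at hpsd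
        nlinarith [hpsd, htq, hqpos]
      nlinarith [h1, h2, hqpos]
  have e4 : x ⬝ᵥ (B⁻¹ *ᵥ x) = a + p := by
    rw [← hydef, ← hxy, ← symm_dot hBt, hB, add_mulVec, dotProduct_add, ← hadef, ← hpdef]
  have e5 : x ⬝ᵥ (A⁻¹ *ᵥ x) = a + 2 * p + q := by
    rw [← hxy]
    nth_rewrite 1 2 [hB]
    rw [add_mulVec, add_dotProduct, mulVec_add, dotProduct_add, dotProduct_add,
      haux, haux, haux2, ← hadef, ← hpdef, ← hqdef]
    ring
  have hfin : x ⬝ᵥ ((A⁻¹ - (2 : ℝ) • B⁻¹) *ᵥ x) = q - a := by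
    rw [sub_mulVec, dotProduct_sub, smul_mulVec, dotProduct_smul, smul_eq_mul, e4, e5]
    ring
  rw [hfin] at hquad
  linarith
end

section
/- (Elliptical potential lemma) Let {φ_j}_{j=1}^t be vectors in ℝ^d with ‖φ_j‖ ≤ 1 for all j. Let Λ₀ be a symmetric positive definite d×d matrix whose smallest eigenvalue is at least 1, and define Λ_j = Λ₀ + Σ_{i=1}^j φ_i φ_iᵀ. Then log(det Λ_t / det Λ₀) ≤ Σ_{j=1}^t φ_jᵀ Λ_{j-1}⁻¹ φ_j ≤ 2 log(det Λ_t / det Λ₀). -/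
open Matrix

private lemma scalar_ineq (x : ℝ) (h0 : 0 ≤ x) (h1 : x ≤ 1) :
    Real.log (1 + x) ≤ x ∧ x ≤ 2 * Real.log (1 + x) := by
  constructor
  · have := Real.log_le_sub_one_of_pos (x := 1 + x) (by linarith)
    linarith
  · have hmul : Real.exp (-(x/2)) * Real.exp (x/2) = 1 := by
      rw [← Real.exp_add]; simp
    have h2 : (1 - x/2) * Real.exp (x/2) ≤ 1 := by
      nlinarith [Real.add_one_le_exp (-(x/2)), Real.exp_pos (x/2)]
    have hE : Real.exp (x/2) ≤ 1 + x := by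
      nlinarith [Real.exp_pos (x/2)]
    have := (Real.le_log_iff_exp_le (by linarith : (0:ℝ) < 1 + x)).2 hE
    linarith

open scoped MatrixOrder in
private lemma psd_sqrt_exists {d : ℕ} {A : Matrix (Fin d) (Fin d) ℝ} (hA : A.PosSemidef) :
    ∃ S : Matrix (Fin d) (Fin d) ℝ, S * S = A ∧ Sᴴ = S :=
  ⟨CFC.sqrt A, CFC.sqrt_mul_sqrt_self A (Matrix.nonneg_iff_posSemidef.2 hA),
    (Matrix.nonneg_iff_posSemidef.1 (CFC.sqrt_nonneg A)).1⟩

private lemma psd_vvt {d : ℕ} (v : Fin d → ℝ) : (vecMulVec v v).PosSemidef := by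
  refine Matrix.PosSemidef.of_dotProduct_mulVec_nonneg ?_ ?_
  · unfold Matrix.IsHermitian
    ext i j
    simp [vecMulVec_apply, conjTranspose_apply, mul_comm]
  · intro y
    have hmv : vecMulVec v v *ᵥ y = (v ⬝ᵥ y) • v := by
      ext i
      simp [vecMulVec_apply, mulVec, dotProduct, Finset.mul_sum, mul_assoc, mul_comm, mul_left_comm]
    rw [hmv]
    have : star y ⬝ᵥ ((v ⬝ᵥ y) • v) = (v ⬝ᵥ y) * (v ⬝ᵥ y) := by
      simp [dotProduct_smul, star_trivial, dotProduct_comm]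
    rw [this]
    exact mul_self_nonneg _

theorem stmt_7 (d t : ℕ) (φ : ℕ → EuclideanSpace ℝ (Fin d))
    (hφ : ∀ j, ‖φ j‖ ≤ 1)
    (Λ₀ : Matrix (Fin d) (Fin d) ℝ) (hΛ₀ : Λ₀.PosDef)
    (hmin : (Λ₀ - 1).PosSemidef)
    (Λ : ℕ → Matrix (Fin d) (Fin d) ℝ)
    (hΛ : ∀ j, Λ j = Λ₀ + ∑ i ∈ Finset.range j, vecMulVec (φ i) (φ i)) :
    Real.log ((Λ t).det / Λ₀.det)
        ≤ ∑ j ∈ Finset.range t, φ j ⬝ᵥ ((Λ j)⁻¹ *ᵥ φ j) ∧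
      ∑ j ∈ Finset.range t, φ j ⬝ᵥ ((Λ j)⁻¹ *ᵥ φ j)
        ≤ 2 * Real.log ((Λ t).det / Λ₀.det) := by
  classical
  set x : ℕ → ℝ := fun j => φ j ⬝ᵥ ((Λ j)⁻¹ *ᵥ φ j) with hxdef
  -- positive semidefiniteness of the accumulated sums
  have hpsdsum : ∀ j, (∑ i ∈ Finset.range j, vecMulVec (φ i) (φ i) :
      Matrix (Fin d) (Fin d) ℝ).PosSemidef := by
    intro j
    induction j with
    | zero => simpa using (Matrix.PosSemidef.zero (n := Fin d) (R := ℝ))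
    | succ n ih =>
        rw [Finset.sum_range_succ]
        exact ih.add (psd_vvt (φ n))
  have hpos : ∀ j, (Λ j).PosDef := fun j => by
    rw [hΛ j]; exact hΛ₀.add_posSemidef (hpsdsum j)
  -- ‖φ j‖² as a dot product
  have hφsq : ∀ j, (φ j) ⬝ᵥ (φ j) ≤ 1 := by
    intro j
    have hn : (φ j) ⬝ᵥ (φ j) = ‖φ j‖ ^ 2 := by
      rw [EuclideanSpace.norm_eq, Real.sq_sqrt (by positivity)]
      simp [dotProduct, sq, Real.norm_eq_abs, abs_mul_abs_self]
    rw [hn]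
    nlinarith [hφ j, norm_nonneg (φ j)]
  -- 0 ≤ x j
  have hx0 : ∀ j, 0 ≤ x j := by
    intro j
    have := ((hpos j).inv.posSemidef).dotProduct_mulVec_nonneg (φ j)
    simpa [star_trivial] using this
  -- (1 - (Λ j)⁻¹) is positive semidefinite
  have hkey : ∀ j, ((1 : Matrix (Fin d) (Fin d) ℝ) - (Λ j)⁻¹).PosSemidef := by
    intro j
    have hΛj := hpos j
    have hinv := hΛj.inv
    have hS := hinv.posSemidef
    obtain ⟨S, hSS, hSh⟩ := psd_sqrt_exists hS
    have hdetS : IsUnit S.det := by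
      have hdinv : (Λ j)⁻¹.det ≠ 0 := hinv.det_pos.ne'
      have : S.det * S.det ≠ 0 := by rw [← det_mul, hSS]; exact hdinv
      exact (mul_ne_zero_iff.1 this).1.isUnit
    have hSinv : S * S⁻¹ = 1 := Matrix.mul_nonsing_inv S hdetS
    have hΛinv : Λ j * (Λ j)⁻¹ = 1 :=
      Matrix.mul_nonsing_inv (Λ j) hΛj.det_pos.ne'.isUnit
    have hSLS : S * Λ j * S = 1 := by
      have h1 : S * Λ j * S * S = S := by
        calc S * Λ j * S * S = S * (Λ j * (S * S)) := by
              simp only [Matrix.mul_assoc]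
          _ = S * (Λ j * (Λ j)⁻¹) := by rw [hSS]
          _ = S := by rw [hΛinv, Matrix.mul_one]
      calc S * Λ j * S = S * Λ j * S * (S * S⁻¹) := by rw [hSinv, Matrix.mul_one]
        _ = (S * Λ j * S * S) * S⁻¹ := by simp only [Matrix.mul_assoc]
        _ = S * S⁻¹ := by rw [h1]
        _ = 1 := hSinv
    have hsub : ((Λ j) - 1).PosSemidef := by
      have heq : (Λ j) - 1 = (Λ₀ - 1) + ∑ i ∈ Finset.range j, vecMulVec (φ i) (φ i) := by
        rw [hΛ j]; abel
      rw [heq]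
      exact hmin.add (hpsdsum j)
    have hconj : (S * ((Λ j) - 1) * Sᴴ).PosSemidef := hsub.mul_mul_conjTranspose_same S
    have heq2 : S * ((Λ j) - 1) * Sᴴ = 1 - (Λ j)⁻¹ := by
      rw [hSh, Matrix.mul_sub, Matrix.mul_one, Matrix.sub_mul, hSLS, hSS]
    rwa [heq2] at hconj
  -- x j ≤ 1
  have hx1 : ∀ j, x j ≤ 1 := by
    intro j
    have h := (hkey j).dotProduct_mulVec_nonneg (φ j)
    have : (0:ℝ) ≤ (φ j) ⬝ᵥ (φ j) - x j := by
      simpa [star_trivial, Matrix.sub_mulVec, Matrix.one_mulVec, dotProduct_sub] using h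
    have := hφsq j
    linarith
  -- determinant recursion
  have hdet : ∀ j, (Λ (j+1)).det = (Λ j).det * (1 + x j) := by
    intro j
    have hstep : Λ (j+1) = Λ j + replicateCol Unit (φ j) * replicateRow Unit (φ j) := by
      rw [hΛ (j+1), hΛ j, Finset.sum_range_succ, ← add_assoc, ← vecMulVec_eq Unit]
    rw [hstep, det_add_replicateCol_mul_replicateRow (hpos j).det_pos.ne'.isUnit]
    congr 1
    rw [Matrix.mul_assoc, ← replicateCol_mulVec, det_unique]
    simp [hxdef]
  -- determinant product formula
  have hprod : ∀ j, (Λ j).det = Λ₀.det * ∏ i ∈ Finset.range j, (1 + x i) := by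
    intro j
    induction j with
    | zero => simp [hΛ 0]
    | succ n ih => rw [hdet n, ih, Finset.prod_range_succ]; ring
  have hfacpos : ∀ i, (0:ℝ) < 1 + x i := fun i => by have := hx0 i; linarith
  have hlog : Real.log ((Λ t).det / Λ₀.det) = ∑ j ∈ Finset.range t, Real.log (1 + x j) := by
    rw [hprod t, mul_comm, mul_div_assoc, div_self hΛ₀.det_pos.ne', mul_one]
    exact Real.log_prod (fun i _ => (hfacpos i).ne')
  have hterm : ∀ i, Real.log (1 + x i) ≤ x i ∧ x i ≤ 2 * Real.log (1 + x i) :=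
    fun i => scalar_ineq (x i) (hx0 i) (hx1 i)
  constructor
  · rw [hlog]
    exact Finset.sum_le_sum fun i _ => (hterm i).1
  · rw [hlog, Finset.mul_sum]
    exact Finset.sum_le_sum fun i _ => (hterm i).2
end
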